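/- Let C be a semisimple F-linear monoidal category with a finite set {X_i}_{i∈Γ} of representatives of the isomorphism classes of simple objects. Then, for a fixed object Z, there is a bijective correspondence between (a) families of morphisms {e_Z(X_i) : Z⊗X_i → X_i⊗Z}_{i∈Γ} satisfying the 'braiding-fusion' relation (t ⊗ id_Z) ∘ e_Z(X_k) = (id_{X_i} ⊗ e_Z(X_j)) ∘ (e_Z(X_i) ⊗ id_{X_j}) ∘ (id_Z ⊗ t) for all i, j, k ∈ Γ and all t ∈ Hom(X_k, X_i⊗X_j), and (b) families {e_Z(X) : Z⊗X → X⊗Z}_{X∈C} natural in X and satisfying the braid relation e_Z(X⊗Y) = (id_X ⊗ e_Z(Y)) ∘ (e_Z(X) ⊗ id_Y). Moreover all e_Z(X) are isomorphisms if and only if all e_Z(X_i), i ∈ Γ, are isomorphisms. -/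

import Mathlib

open CategoryTheory MonoidalCategory CategoryTheory.Limits

section Aux

variable {F : Type*} [Field F] {C : Type*} [Category C] [MonoidalCategory C] [Preadditive C]
  [CategoryTheory.Linear F C] [MonoidalPreadditive C] [HasFiniteBiproducts C]

omit [MonoidalCategory C] [MonoidalPreadditive C] [HasFiniteBiproducts C] in
lemma smul_id_inj' {W : C} (hW : ∀ f : W ⟶ W, ∃! a : F, f = a • 𝟙 W) {a b : F}
    (hab : a • 𝟙 W = b • 𝟙 W) : a = b := by
  obtain ⟨c, _, hu⟩ := hW (a • 𝟙 W)
  exact (hu a rfl).trans (hu b hab).symm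

lemma exists_unit_iso' (Γ : Type) [Fintype Γ] (X : Γ → C)
    (hsimple : ∀ (i : Γ) (f : X i ⟶ X i), ∃! a : F, f = a • 𝟙 (X i))
    (hunit : ∀ f : 𝟙_ C ⟶ 𝟙_ C, ∃! a : F, f = a • 𝟙 (𝟙_ C))
    {n : Γ → ℕ} (h : 𝟙_ C ≅ ⨁ fun p : (Σ i : Γ, Fin (n i)) => X p.1) :
    ∃ i₀ : Γ, Nonempty (𝟙_ C ≅ X i₀) := by
  classical
  set P := (Σ i : Γ, Fin (n i))
  let x : P → C := fun p => X p.1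
  let e : P → (𝟙_ C ⟶ 𝟙_ C) := fun p =>
    h.hom ≫ biproduct.π x p ≫ biproduct.ι x p ≫ h.inv
  have he : ∀ p, ∃ a : F, e p = a • 𝟙 (𝟙_ C) :=
    fun p => ⟨(hunit (e p)).choose, (hunit (e p)).choose_spec.1⟩
  choose a ha using he
  have hsum : ∑ p, e p = 𝟙 (𝟙_ C) := by
    simp only [e]
    rw [← Preadditive.comp_sum]
    simp only [← Category.assoc]
    rw [← Preadditive.sum_comp, biproduct.total]
    exact (congrArg (h.hom ≫ ·) (Category.id_comp h.inv)).trans h.hom_inv_id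
  have hidem : ∀ p, e p ≫ e p = e p := by
    intro p
    simp only [e, Category.assoc, Iso.inv_hom_id_assoc]
    rw [biproduct.ι_π_self_assoc]
  have haidem : ∀ p, a p * a p = a p := by
    intro p
    apply smul_id_inj' hunit
    rw [mul_smul]
    have := hidem p
    rw [ha p] at this
    simpa [Linear.smul_comp, Linear.comp_smul] using this
  have hasum : ∑ p, a p = 1 := by
    apply smul_id_inj' hunit
    rw [Finset.sum_smul]
    simp_rw [← ha]
    rw [hsum, one_smul]
  have hex : ∃ p₀ : P, a p₀ ≠ 0 := by
    by_contra hc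
    push_neg at hc
    rw [Finset.sum_congr rfl (fun p _ => hc p)] at hasum
    simp at hasum
  obtain ⟨p₀, hp₀⟩ := hex
  have hap₀ : a p₀ = 1 := by
    have h2 : a p₀ * (a p₀ - 1) = 0 := by linear_combination haidem p₀
    rcases mul_eq_zero.mp h2 with h3 | h3
    · exact absurd h3 hp₀
    · exact sub_eq_zero.mp h3
  have hep₀ : e p₀ = 𝟙 (𝟙_ C) := by rw [ha p₀, hap₀, one_smul]
  set s : 𝟙_ C ⟶ X p₀.1 := h.hom ≫ biproduct.π x p₀ with hs
  set r : X p₀.1 ⟶ 𝟙_ C := biproduct.ι x p₀ ≫ h.inv with hr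
  have hsr : s ≫ r = 𝟙 (𝟙_ C) := by
    simpa [s, r, e, Category.assoc] using hep₀
  obtain ⟨c, hc, _⟩ := hsimple p₀.1 (r ≫ s)
  have h3 : s ≫ (r ≫ s) ≫ r = 𝟙 (𝟙_ C) := by
    rw [show s ≫ (r ≫ s) ≫ r = (s ≫ r) ≫ s ≫ r by simp, hsr, Category.id_comp]
  rw [hc] at h3
  simp only [Linear.comp_smul, Linear.smul_comp, Category.id_comp] at h3
  rw [hsr] at h3
  have hc1 : c = 1 := smul_id_inj' hunit (by rw [one_smul]; exact h3)
  have hrs : r ≫ s = 𝟙 (X p₀.1) := by rw [hc, hc1, one_smul]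
  exact ⟨p₀.1, ⟨⟨s, r, hsr, hrs⟩⟩⟩

end Aux

section Coherence

variable {C : Type*} [Category C] [MonoidalCategory C]

lemma dagger' {Z U : C} (ι : 𝟙_ C ≅ U) {Xi : C} (fi : Z ⊗ Xi ⟶ Xi ⊗ Z) (fu : Z ⊗ U ⟶ U ⊗ Z) :
    (Z ◁ (ρ_ Xi).inv) ≫ (Z ◁ (Xi ◁ ι.hom)) ≫ (α_ Z Xi U).inv ≫ (fi ▷ U) ≫
      (α_ Xi Z U).hom ≫ (Xi ◁ fu) ≫ (α_ Xi U Z).inv ≫ ((Xi ◁ ι.inv) ▷ Z) ≫ ((ρ_ Xi).hom ▷ Z)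
    = fi ≫ (Xi ◁ ((ρ_ Z).inv ≫ (Z ◁ ι.hom) ≫ fu ≫ (ι.inv ▷ Z) ≫ (λ_ Z).hom)) := by
  simp only [MonoidalCategory.whiskerLeft_comp, Category.assoc]
  rw [associator_inv_naturality_right_assoc, whisker_exchange_assoc,
      whiskerLeft_rightUnitor_inv, Category.assoc, Iso.hom_inv_id_assoc,
      ← rightUnitor_inv_naturality_assoc, associator_naturality_right_assoc,
      whiskerLeft_rightUnitor_inv Xi Z, Category.assoc]
  simp

lemma fnat' (Γ : Type) (X : Γ → C) (Z : C) (i₀ : Γ) (ι : 𝟙_ C ≅ X i₀)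
    (f : ∀ i, Z ⊗ X i ⟶ X i ⊗ Z)
    (hA : ∀ (i j k : Γ) (t : X k ⟶ X i ⊗ X j),
      f k ≫ (t ▷ Z) = (Z ◁ t) ≫ (α_ Z (X i) (X j)).inv ≫ (f i ▷ X j) ≫ (α_ (X i) Z (X j)).hom ≫
        (X i ◁ f j) ≫ (α_ (X i) (X j) Z).inv)
    {k i : Γ} (v : X k ⟶ X i) :
    f k ≫ (v ▷ Z) = (Z ◁ v) ≫ f i := by
  set E : Z ⟶ Z := (ρ_ Z).inv ≫ (Z ◁ ι.hom) ≫ f i₀ ≫ (ι.inv ▷ Z) ≫ (λ_ Z).hom with hE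
  have star : ∀ {k i : Γ} (v : X k ⟶ X i), f k ≫ (v ▷ Z) = (Z ◁ v) ≫ f i ≫ (X i ◁ E) := by
    intro k i v
    have h := hA i i₀ k (v ≫ (ρ_ (X i)).inv ≫ (X i ◁ ι.hom))
    simp only [comp_whiskerRight, MonoidalCategory.whiskerLeft_comp, Category.assoc] at h
    have h2 : f k ≫ (v ▷ Z) =
        ((Z ◁ v) ≫ (Z ◁ (ρ_ (X i)).inv) ≫ (Z ◁ (X i ◁ ι.hom)) ≫ (α_ Z (X i) (X i₀)).inv ≫
          (f i ▷ X i₀) ≫ (α_ (X i) Z (X i₀)).hom ≫ (X i ◁ f i₀) ≫ (α_ (X i) (X i₀) Z).inv) ≫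
          ((X i ◁ ι.inv) ▷ Z) ≫ ((ρ_ (X i)).hom ▷ Z) := by
      rw [← cancel_mono ((ρ_ (X i)).inv ▷ Z), ← cancel_mono ((X i ◁ ι.hom) ▷ Z)]
      simp only [Category.assoc]
      rw [h]
      simp only [← MonoidalCategory.whiskerLeft_comp_assoc, ← MonoidalCategory.whiskerLeft_comp,
        ← comp_whiskerRight_assoc, ← comp_whiskerRight, Iso.inv_hom_id, Iso.hom_inv_id]
      simp
    rw [h2]
    simp only [Category.assoc]
    rw [← Category.assoc (Z ◁ v), ← Category.assoc (Z ◁ v)]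
    simp only [Category.assoc]
    congr 1
    exact dagger' ι (f i) (f i₀)
  have hEid : f i ≫ (X i ◁ E) = f i := by
    have := star (𝟙 (X i))
    simpa using this.symm
  rw [star v, hEid]

lemma braid_transport' {Z Y Y' Xa Xb : C} (gY : Z ⊗ Y ⟶ Y ⊗ Z) (gY' : Z ⊗ Y' ⟶ Y' ⊗ Z)
    (gA : Z ⊗ Xa ⟶ Xa ⊗ Z) (gB : Z ⊗ Xb ⟶ Xb ⊗ Z)
    (s : Xa ⟶ Y) (s' : Xb ⟶ Y')
    (hs : gA ≫ (s ▷ Z) = (Z ◁ s) ≫ gY) (hs' : gB ≫ (s' ▷ Z) = (Z ◁ s') ≫ gY') :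
    (Z ◁ (s ⊗ₘ s')) ≫ (α_ Z Y Y').inv ≫ (gY ▷ Y') ≫ (α_ Y Z Y').hom ≫ (Y ◁ gY') ≫ (α_ Y Y' Z).inv
    = (α_ Z Xa Xb).inv ≫ (gA ▷ Xb) ≫ (α_ Xa Z Xb).hom ≫ (Xa ◁ gB) ≫ (α_ Xa Xb Z).inv ≫
        ((s ⊗ₘ s') ▷ Z) := by
  simp only [← id_tensorHom, ← tensorHom_id] at *
  calc
    (𝟙 Z ⊗ₘ (s ⊗ₘ s')) ≫ (α_ Z Y Y').inv ≫ (gY ⊗ₘ 𝟙 Y') ≫ (α_ Y Z Y').hom ≫ (𝟙 Y ⊗ₘ gY') ≫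
        (α_ Y Y' Z).inv
      = (α_ Z Xa Xb).inv ≫ (((𝟙 Z ⊗ₘ s) ≫ gY) ⊗ₘ (s' ≫ 𝟙 Y')) ≫ (α_ Y Z Y').hom ≫
          (𝟙 Y ⊗ₘ gY') ≫ (α_ Y Y' Z).inv := by
        rw [associator_inv_naturality_assoc, tensorHom_comp_tensorHom_assoc]
    _ = (α_ Z Xa Xb).inv ≫ ((gA ≫ (s ⊗ₘ 𝟙 Z)) ⊗ₘ (𝟙 Xb ≫ s')) ≫ (α_ Y Z Y').hom ≫
          (𝟙 Y ⊗ₘ gY') ≫ (α_ Y Y' Z).inv := by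
        rw [← hs]; simp only [Category.comp_id, Category.id_comp]
    _ = (α_ Z Xa Xb).inv ≫ ((gA ⊗ₘ 𝟙 Xb) ≫ ((s ⊗ₘ 𝟙 Z) ⊗ₘ s')) ≫ (α_ Y Z Y').hom ≫
          (𝟙 Y ⊗ₘ gY') ≫ (α_ Y Y' Z).inv := by
        rw [← tensorHom_comp_tensorHom]
    _ = (α_ Z Xa Xb).inv ≫ (gA ⊗ₘ 𝟙 Xb) ≫ (α_ Xa Z Xb).hom ≫ (s ⊗ₘ (𝟙 Z ⊗ₘ s')) ≫
          (𝟙 Y ⊗ₘ gY') ≫ (α_ Y Y' Z).inv := by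
        rw [Category.assoc, associator_naturality_assoc]
    _ = (α_ Z Xa Xb).inv ≫ (gA ⊗ₘ 𝟙 Xb) ≫ (α_ Xa Z Xb).hom ≫
          ((s ≫ 𝟙 Y) ⊗ₘ ((𝟙 Z ⊗ₘ s') ≫ gY')) ≫ (α_ Y Y' Z).inv := by
        rw [tensorHom_comp_tensorHom_assoc]
    _ = (α_ Z Xa Xb).inv ≫ (gA ⊗ₘ 𝟙 Xb) ≫ (α_ Xa Z Xb).hom ≫
          ((𝟙 Xa ≫ s) ⊗ₘ (gB ≫ (s' ⊗ₘ 𝟙 Z))) ≫ (α_ Y Y' Z).inv := by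
        rw [← hs']; simp only [Category.comp_id, Category.id_comp]
    _ = (α_ Z Xa Xb).inv ≫ (gA ⊗ₘ 𝟙 Xb) ≫ (α_ Xa Z Xb).hom ≫ (𝟙 Xa ⊗ₘ gB) ≫
          (s ⊗ₘ (s' ⊗ₘ 𝟙 Z)) ≫ (α_ Y Y' Z).inv := by
        rw [← tensorHom_comp_tensorHom_assoc]
    _ = _ := by
        rw [associator_inv_naturality]

end Coherence

section Biprod

variable {C : Type*} [Category C] [MonoidalCategory C] [Preadditive C]
  [MonoidalPreadditive C] [HasFiniteBiproducts C]

lemma je0' {J : Type} [Fintype J] (x : J → C) {Z T : C} {a b : Z ⊗ ⨁ x ⟶ T}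
    (h : ∀ p, (Z ◁ biproduct.ι x p) ≫ a = (Z ◁ biproduct.ι x p) ≫ b) : a = b := by
  rw [← cancel_epi (leftDistributor Z x).inv]
  apply biproduct.hom_ext'
  intro p
  simpa [biproduct_ι_comp_leftDistributor_inv] using h p

lemma je2' {J J' : Type} [Fintype J] [Fintype J'] (x : J → C) (x' : J' → C) {Z T : C}
    {a b : Z ⊗ ((⨁ x) ⊗ (⨁ x')) ⟶ T}
    (h : ∀ p q, (Z ◁ (biproduct.ι x p ⊗ₘ biproduct.ι x' q)) ≫ a =
      (Z ◁ (biproduct.ι x p ⊗ₘ biproduct.ι x' q)) ≫ b) : a = b := by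
  rw [← cancel_epi (Z ◁ (rightDistributor x (⨁ x')).inv)]
  apply je0'
  intro p
  rw [← MonoidalCategory.whiskerLeft_comp_assoc, ← MonoidalCategory.whiskerLeft_comp_assoc,
    biproduct_ι_comp_rightDistributor_inv]
  rw [← cancel_epi (Z ◁ (leftDistributor (x p) x').inv)]
  apply je0'
  intro q
  simp only [← MonoidalCategory.whiskerLeft_comp_assoc, ← MonoidalCategory.whiskerLeft_comp,
    Category.assoc, biproduct_ι_comp_leftDistributor_inv_assoc]
  rw [← tensorHom_def']
  exact h p q

variable {Γ : Type} {X : Γ → C} {Z : C}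

/-- The canonical map `Z ⊗ ⨁ (X ∘ σ) ⟶ (⨁ (X ∘ σ)) ⊗ Z` built from a family `f`. -/
noncomputable def Gmap (X : Γ → C) (Z : C) (f : ∀ i, Z ⊗ X i ⟶ X i ⊗ Z)
    {J : Type} [Fintype J] (σ : J → Γ) :
    Z ⊗ (⨁ fun p => X (σ p)) ⟶ (⨁ fun p => X (σ p)) ⊗ Z :=
  (leftDistributor Z _).hom ≫ biproduct.map (fun p => f (σ p)) ≫
    (rightDistributor _ Z).inv

lemma Gmap_nat (f : ∀ i, Z ⊗ X i ⟶ X i ⊗ Z)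
    (hnat : ∀ {k i : Γ} (v : X k ⟶ X i), f k ≫ (v ▷ Z) = (Z ◁ v) ≫ f i)
    {J J' : Type} [Fintype J] [Fintype J'] (σ : J → Γ) (σ' : J' → Γ)
    (m : (⨁ fun p => X (σ p)) ⟶ (⨁ fun q => X (σ' q))) :
    Gmap X Z f σ ≫ (m ▷ Z) = (Z ◁ m) ≫ Gmap X Z f σ' := by
  apply je0'
  intro p
  rw [← cancel_mono (rightDistributor (fun q => X (σ' q)) Z).hom]
  apply biproduct.hom_ext
  intro q
  simp only [Gmap, Category.assoc, Iso.inv_hom_id, Category.comp_id,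
    rightDistributor_hom_comp_biproduct_π, Iso.inv_hom_id_assoc,
    biproduct_ι_comp_leftDistributor_hom_assoc, biproduct.ι_map_assoc,
    biproduct_ι_comp_rightDistributor_inv_assoc, biproduct.map_π,
    biproduct.map_π_assoc, leftDistributor_hom_comp_biproduct_π,
    leftDistributor_hom_comp_biproduct_π_assoc]
  simp only [← MonoidalCategory.whiskerLeft_comp_assoc, ← MonoidalCategory.whiskerLeft_comp,
    ← comp_whiskerRight_assoc, ← comp_whiskerRight, Category.assoc]
  exact hnat _

lemma Gmap_comp (f : ∀ i, Z ⊗ X i ⟶ X i ⊗ Z)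
    (hnat : ∀ {k i : Γ} (v : X k ⟶ X i), f k ≫ (v ▷ Z) = (Z ◁ v) ≫ f i)
    {J : Type} [Fintype J] (σ : J → Γ) {i : Γ} (w : X i ⟶ ⨁ fun p => X (σ p)) :
    f i ≫ (w ▷ Z) = (Z ◁ w) ≫ Gmap X Z f σ := by
  rw [← cancel_mono (rightDistributor (fun q => X (σ q)) Z).hom]
  apply biproduct.hom_ext
  intro q
  simp only [Gmap, Category.assoc, Iso.inv_hom_id, Category.comp_id,
    rightDistributor_hom_comp_biproduct_π, Iso.inv_hom_id_assoc,
    biproduct.map_π, biproduct.map_π_assoc, leftDistributor_hom_comp_biproduct_π,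
    leftDistributor_hom_comp_biproduct_π_assoc]
  simp only [← MonoidalCategory.whiskerLeft_comp_assoc, ← MonoidalCategory.whiskerLeft_comp,
    ← comp_whiskerRight_assoc, ← comp_whiskerRight, Category.assoc]
  exact hnat _

lemma g_on_biproduct (g : ∀ Y : C, Z ⊗ Y ⟶ Y ⊗ Z)
    (hg : ∀ {Y Y' : C} (t : Y ⟶ Y'), g Y ≫ (t ▷ Z) = (Z ◁ t) ≫ g Y')
    {J : Type} [Fintype J] (σ : J → Γ) :
    g (⨁ fun p => X (σ p)) = Gmap X Z (fun i => g (X i)) σ := by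
  rw [← cancel_mono (rightDistributor (fun q => X (σ q)) Z).hom]
  apply biproduct.hom_ext
  intro q
  simp only [Gmap, Category.assoc, Iso.inv_hom_id, Category.comp_id,
    rightDistributor_hom_comp_biproduct_π, biproduct.map_π, biproduct.map_π_assoc,
    leftDistributor_hom_comp_biproduct_π, leftDistributor_hom_comp_biproduct_π_assoc,
    Iso.inv_hom_id_assoc]
  exact hg _

lemma g_det (g : ∀ Y : C, Z ⊗ Y ⟶ Y ⊗ Z)
    (hg : ∀ {Y Y' : C} (t : Y ⟶ Y'), g Y ≫ (t ▷ Z) = (Z ◁ t) ≫ g Y')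
    {J : Type} [Fintype J] (σ : J → Γ) {Y : C} (h : Y ≅ ⨁ fun p => X (σ p)) :
    g Y = (Z ◁ h.hom) ≫ Gmap X Z (fun i => g (X i)) σ ≫ (h.inv ▷ Z) := by
  rw [← cancel_mono (h.hom ▷ Z)]
  rw [hg h.hom, g_on_biproduct g hg σ]
  simp [← comp_whiskerRight]

end Biprod

/-- Let `C` be a semisimple `F`-linear monoidal category with representative simple
objects `X i`, `i ∈ Γ` (Γ finite).  For a fixed object `Z` there is a bijective correspondence
between families `e_Z(X i) : Z ⊗ X i ⟶ X i ⊗ Z` satisfying the braiding-fusion relation and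
families `e_Z(Y) : Z ⊗ Y ⟶ Y ⊗ Z`, natural in `Y`, satisfying the braid relation; and all
`e_Z(Y)` are isomorphisms iff all `e_Z(X i)` are. -/
theorem halfBraiding_from_simples (F : Type*) [Field F] {C : Type*} [Category C]
    [MonoidalCategory C] [Preadditive C] [CategoryTheory.Linear F C] [MonoidalPreadditive C]
    [MonoidalLinear F C] [HasFiniteBiproducts C] [IsIdempotentComplete C]
    (Γ : Type) [Fintype Γ] (X : Γ → C)
    (hsimple : ∀ (i : Γ) (f : X i ⟶ X i), ∃! a : F, f = a • 𝟙 (X i))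
    (hdistinct : ∀ i j : Γ, Nonempty (X i ≅ X j) → i = j)
    (hcomplete : ∀ Z : C, ∃ n : Γ → ℕ,
      Nonempty (Z ≅ ⨁ fun p : (Σ i : Γ, Fin (n i)) => X p.1))
    (hunit : ∀ f : 𝟙_ C ⟶ 𝟙_ C, ∃! a : F, f = a • 𝟙 (𝟙_ C))
    (Z : C) :
    let A : (∀ i : Γ, Z ⊗ X i ⟶ X i ⊗ Z) → Prop := fun f =>
      ∀ (i j k : Γ) (t : X k ⟶ X i ⊗ X j),
        f k ≫ (t ▷ Z) =
          (Z ◁ t) ≫ (α_ Z (X i) (X j)).inv ≫ (f i ▷ X j) ≫ (α_ (X i) Z (X j)).hom ≫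
            (X i ◁ f j) ≫ (α_ (X i) (X j) Z).inv
    let B : (∀ Y : C, Z ⊗ Y ⟶ Y ⊗ Z) → Prop := fun g =>
      (∀ {Y Y' : C} (t : Y ⟶ Y'), g Y ≫ (t ▷ Z) = (Z ◁ t) ≫ g Y') ∧
      (∀ Y Y' : C, g (Y ⊗ Y') =
        (α_ Z Y Y').inv ≫ (g Y ▷ Y') ≫ (α_ Y Z Y').hom ≫ (Y ◁ g Y') ≫ (α_ Y Y' Z).inv)
    (∀ g, B g → A (fun i => g (X i))) ∧
    (∀ f, A f → ∃ g, B g ∧ ∀ i, g (X i) = f i) ∧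
    (∀ g g', B g → B g' → (∀ i, g (X i) = g' (X i)) → g = g') ∧
    (∀ g, B g → ((∀ Y, IsIso (g Y)) ↔ ∀ i, IsIso (g (X i)))) := by
  classical
  intro A B
  -- choose decompositions for all objects
  choose nn hh using hcomplete
  let hY : ∀ Y : C, Y ≅ ⨁ fun p : (Σ i : Γ, Fin (nn Y i)) => X p.1 := fun Y => (hh Y).some
  -- the unit is isomorphic to some simple
  obtain ⟨i₀, ⟨ι⟩⟩ := exists_unit_iso' (F := F) Γ X hsimple hunit (hY (𝟙_ C))
  refine ⟨?_, ?_, ?_, ?_⟩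
  · -- B → A
    intro g hB i j k t
    show g (X k) ≫ (t ▷ Z) = _
    rw [hB.1 t, hB.2 (X i) (X j)]
  · -- A → ∃ B extension
    intro f hA
    have hnat : ∀ {k i : Γ} (v : X k ⟶ X i), f k ≫ (v ▷ Z) = (Z ◁ v) ≫ f i :=
      fun v => fnat' Γ X Z i₀ ι f hA v
    let gg : ∀ Y : C, Z ⊗ Y ⟶ Y ⊗ Z := fun Y =>
      (Z ◁ (hY Y).hom) ≫ Gmap X Z f Sigma.fst ≫ ((hY Y).inv ▷ Z)
    have gnat : ∀ {Y Y' : C} (t : Y ⟶ Y'), gg Y ≫ (t ▷ Z) = (Z ◁ t) ≫ gg Y' := by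
      intro Y Y' t
      have hm := Gmap_nat f hnat (Sigma.fst (β := fun i => Fin (nn Y i)))
        (Sigma.fst (β := fun i => Fin (nn Y' i))) ((hY Y).inv ≫ t ≫ (hY Y').hom)
      calc gg Y ≫ (t ▷ Z)
          = (Z ◁ (hY Y).hom) ≫ Gmap X Z f Sigma.fst ≫
              ((((hY Y).inv ≫ t ≫ (hY Y').hom) ≫ (hY Y').inv) ▷ Z) := by
            simp [gg, comp_whiskerRight]
        _ = (Z ◁ (hY Y).hom) ≫ (Gmap X Z f Sigma.fst ≫
              (((hY Y).inv ≫ t ≫ (hY Y').hom) ▷ Z)) ≫ ((hY Y').inv ▷ Z) := by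
            rw [comp_whiskerRight]; simp only [Category.assoc]
        _ = (Z ◁ (hY Y).hom) ≫ ((Z ◁ ((hY Y).inv ≫ t ≫ (hY Y').hom)) ≫
              Gmap X Z f Sigma.fst) ≫ ((hY Y').inv ▷ Z) := by rw [hm]
        _ = (Z ◁ t) ≫ gg Y' := by
            simp only [gg, MonoidalCategory.whiskerLeft_comp, Category.assoc,
              Iso.hom_inv_id_assoc]
            rw [← MonoidalCategory.whiskerLeft_comp_assoc, Iso.hom_inv_id,
              MonoidalCategory.whiskerLeft_id, Category.id_comp]
    have gX : ∀ i : Γ, gg (X i) = f i := by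
      intro i
      have h1 := Gmap_comp f hnat (Sigma.fst (β := fun j => Fin (nn (X i) j))) (hY (X i)).hom
      show (Z ◁ (hY (X i)).hom) ≫ Gmap X Z f Sigma.fst ≫ ((hY (X i)).inv ▷ Z) = f i
      rw [← Category.assoc, ← h1]
      simp [← comp_whiskerRight]
    -- braiding on pairs of simples
    have bs : ∀ a b : Γ, gg (X a ⊗ X b) =
        (α_ Z (X a) (X b)).inv ≫ (gg (X a) ▷ X b) ≫ (α_ (X a) Z (X b)).hom ≫
          (X a ◁ gg (X b)) ≫ (α_ (X a) (X b) Z).inv := by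
      intro a b
      rw [← cancel_epi (Z ◁ (hY (X a ⊗ X b)).inv)]
      apply je0'
      intro p
      simp only [← MonoidalCategory.whiskerLeft_comp_assoc]
      have hs := gnat (biproduct.ι (fun p : (Σ i : Γ, Fin (nn (X a ⊗ X b) i)) => X p.1) p ≫
        (hY (X a ⊗ X b)).inv)
      rw [← hs, gX p.1, gX a, gX b]
      simpa only [Category.assoc] using hA a b p.1
        (biproduct.ι (fun p : (Σ i : Γ, Fin (nn (X a ⊗ X b) i)) => X p.1) p ≫
          (hY (X a ⊗ X b)).inv)
    refine ⟨gg, ⟨fun {Y Y'} t => gnat t, ?_⟩, gX⟩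
    -- the braid relation in general
    intro Y Y'
    rw [← cancel_epi (Z ◁ ((hY Y).inv ⊗ₘ (hY Y').inv))]
    apply je2'
    intro p q
    simp only [← MonoidalCategory.whiskerLeft_comp_assoc, tensorHom_comp_tensorHom]
    have hsY := gnat (biproduct.ι (fun p : (Σ i : Γ, Fin (nn Y i)) => X p.1) p ≫ (hY Y).inv)
    have hsY' := gnat (biproduct.ι (fun q : (Σ i : Γ, Fin (nn Y' i)) => X q.1) q ≫ (hY Y').inv)
    have hst := gnat ((biproduct.ι (fun p : (Σ i : Γ, Fin (nn Y i)) => X p.1) p ≫ (hY Y).inv) ⊗ₘ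
      (biproduct.ι (fun q : (Σ i : Γ, Fin (nn Y' i)) => X q.1) q ≫ (hY Y').inv))
    rw [← hst, bs p.1 q.1]
    rw [braid_transport' (gg Y) (gg Y') (gg (X p.1)) (gg (X q.1)) _ _ hsY hsY']
    simp only [Category.assoc]
  · -- uniqueness
    intro g g' hB hB' hagree
    funext Y
    have e1 := g_det g hB.1 (Sigma.fst (β := fun i => Fin (nn Y i))) (hY Y)
    have e2 := g_det g' hB'.1 (Sigma.fst (β := fun i => Fin (nn Y i))) (hY Y)
    rw [e1, e2, show (fun i => g (X i)) = (fun i => g' (X i)) from funext hagree]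
  · -- isomorphism criterion
    intro g hB
    constructor
    · intro h i; exact h (X i)
    · intro hi Y
      rw [g_det g hB.1 (Sigma.fst (β := fun i => Fin (nn Y i))) (hY Y)]
      have : IsIso (biproduct.map fun p : (Σ i : Γ, Fin (nn Y i)) => g (X p.1)) := by
        have : (biproduct.map fun p : (Σ i : Γ, Fin (nn Y i)) => g (X p.1)) =
            (biproduct.mapIso fun p : (Σ i : Γ, Fin (nn Y i)) =>
              @asIso _ _ _ _ (g (X p.1)) (hi p.1)).hom := rfl
        rw [this]
        infer_instance
      dsimp only [Gmap]
      infer_instance
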